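/- Under the stated hypotheses, the perturbed forms are nonnegative: Ŝ_n(u_n, u_n) ≥ 0 for every n ≥ 1 and every u_n ∈ D(S_n), and Ŝ(u, u) ≥ 0 for every u ∈ D(S). -/

import Mathlib

open MeasureTheory Filter Topology

noncomputable section

namespace Mosco

variable {E : Type*} [MeasurableSpace E]

/-- The inner product of two real-valued functions with respect to a measure,
`⟨φ, ψ⟩ = ∫ φ ψ dμ`. -/
def ip (μ : Measure E) (φ ψ : E → ℝ) : ℝ := ∫ x, φ x * ψ x ∂μ

/-- The measure-theoretic framework: mutually singular probability measures `ν n`,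
`n : ℕ` (`ν 0` playing the role of the limit measure `ν`), such that `L²(E, ν 0)` is
separable, together with disjoint sets `En n` carrying `ν n`. -/
structure Frame0 (E : Type*) [MeasurableSpace E] where
  ν : ℕ → Measure E
  prob : ∀ n, IsProbabilityMeasure (ν n)
  singular : ∀ m n, m ≠ n → (ν m).MutuallySingular (ν n)
  separableL2 : TopologicalSpace.SeparableSpace (Lp ℝ 2 (ν 0))
  En : ℕ → Set E
  measEn : ∀ n, MeasurableSet (En n)
  disjEn : ∀ m n, m ≠ n → Disjoint (En m) (En n)
  nullEn : ∀ n, ν n (En n)ᶜ = 0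

open Classical

/-- The `L²(μ)`-class of a function (zero if the function is not square-integrable). -/
def toL2 (μ : Measure E) (φ : E → ℝ) : Lp ℝ 2 μ :=
  if h : MemLp φ 2 μ then h.toLp φ else 0

/-- A strongly continuous semigroup of bounded linear operators on `L²(E, μ)`. -/
structure Semigroup2 {E : Type*} [MeasurableSpace E] (μ : Measure E) where
  T : ℝ → Lp ℝ 2 μ →L[ℝ] Lp ℝ 2 μ
  T_zero : T 0 = ContinuousLinearMap.id ℝ (Lp ℝ 2 μ)
  T_add : ∀ s t : ℝ, 0 ≤ s → 0 ≤ t → T (s + t) = (T s).comp (T t)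
  strongCont : ∀ f : Lp ℝ 2 μ, Tendsto (fun t => T t f) (𝓝[≥] (0:ℝ)) (𝓝 f)

namespace Semigroup2

variable {μ : Measure E}

/-- The semigroup is a contraction semigroup. -/
def IsContraction (sg : Semigroup2 μ) : Prop := ∀ t : ℝ, 0 ≤ t → ‖sg.T t‖ ≤ 1

/-- The adjoint (dual) semigroup `T'`. -/
def dual (sg : Semigroup2 μ) (t : ℝ) : Lp ℝ 2 μ →L[ℝ] Lp ℝ 2 μ :=
  ContinuousLinearMap.adjoint (sg.T t)

/-- Membership in the domain `D(A)` of the generator. -/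
def memDom (sg : Semigroup2 μ) (f : Lp ℝ 2 μ) : Prop :=
  ∃ g : Lp ℝ 2 μ, Tendsto (fun t : ℝ => t⁻¹ • (sg.T t f - f)) (𝓝[>] (0:ℝ)) (𝓝 g)

/-- The generator `A` (zero off its domain). -/
def gen (sg : Semigroup2 μ) (f : Lp ℝ 2 μ) : Lp ℝ 2 μ :=
  if h : sg.memDom f then Exists.choose h else 0

/-- Membership in the domain `D(A')` of the adjoint generator. -/
def memDom' (sg : Semigroup2 μ) (f : Lp ℝ 2 μ) : Prop :=
  ∃ g : Lp ℝ 2 μ, Tendsto (fun t : ℝ => t⁻¹ • (sg.dual t f - f)) (𝓝[>] (0:ℝ)) (𝓝 g)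

/-- The adjoint generator `A'` (zero off its domain). -/
def gen' (sg : Semigroup2 μ) (f : Lp ℝ 2 μ) : Lp ℝ 2 μ :=
  if h : sg.memDom' f then Exists.choose h else 0

/-- The resolvent `G_β = (β - A)⁻¹ = ∫_0^∞ e^{-βt} T_t dt`. -/
def res (sg : Semigroup2 μ) (β : ℝ) (f : Lp ℝ 2 μ) : Lp ℝ 2 μ :=
  ∫ t in Set.Ioi (0:ℝ), Real.exp (-β * t) • sg.T t f

/-- The adjoint resolvent `G'_β`. -/
def res' (sg : Semigroup2 μ) (β : ℝ) (f : Lp ℝ 2 μ) : Lp ℝ 2 μ :=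
  ∫ t in Set.Ioi (0:ℝ), Real.exp (-β * t) • sg.dual t f

/-- `u ∈ D(A) = D(S)`, at the level of functions. -/
def memD (sg : Semigroup2 μ) (u : E → ℝ) : Prop := sg.memDom (toL2 μ u)

/-- `u ∈ D(A')`, at the level of functions. -/
def memD' (sg : Semigroup2 μ) (u : E → ℝ) : Prop := sg.memDom' (toL2 μ u)

/-- `A u`, at the level of functions. -/
def Af (sg : Semigroup2 μ) (u : E → ℝ) : E → ℝ := sg.gen (toL2 μ u)

/-- `A' u`, at the level of functions. -/
def Af' (sg : Semigroup2 μ) (u : E → ℝ) : E → ℝ := sg.gen' (toL2 μ u)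

/-- `G_β u`, at the level of functions. -/
def Res (sg : Semigroup2 μ) (β : ℝ) (u : E → ℝ) : E → ℝ := sg.res β (toL2 μ u)

/-- `G'_β u`, at the level of functions. -/
def Res' (sg : Semigroup2 μ) (β : ℝ) (u : E → ℝ) : E → ℝ := sg.res' β (toL2 μ u)

/-- `T_t u`, at the level of functions. -/
def Tf (sg : Semigroup2 μ) (t : ℝ) (u : E → ℝ) : E → ℝ := sg.T t (toL2 μ u)

/-- `T'_t u`, at the level of functions. -/
def Tf' (sg : Semigroup2 μ) (t : ℝ) (u : E → ℝ) : E → ℝ := sg.dual t (toL2 μ u)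

/-- The bilinear form `S(u, v) = ⟨-A u, v⟩` associated with the semigroup. -/
def S (sg : Semigroup2 μ) (u v : E → ℝ) : ℝ := ip μ (fun x => -(sg.Af u x)) v

/-- `S_β(u, v) = β ⟨u, v⟩ + S(u, v)`. -/
def Sb (sg : Semigroup2 μ) (β : ℝ) (u v : E → ℝ) : ℝ := β * ip μ u v + sg.S u v

end Semigroup2

/-- The constant function `1`. -/
def one (E : Type*) : E → ℝ := fun _ => 1

/-- The perturbed form `Ŝ(u, v) = S(u, v) + (1/2) ⟨A'1 · u, v⟩`. -/
def hatS {E : Type*} [MeasurableSpace E] {μ : Measure E} (sg : Semigroup2 μ)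
    (u v : E → ℝ) : ℝ :=
  sg.S u v + (1 / 2) * ip μ (fun x => sg.Af' (one E) x * u x) v

/-! ### Auxiliary lemmas -/

section Aux

open scoped ENNReal NNReal

local notation "⟪" x ", " y "⟫" => @inner ℝ _ _ x y

variable {μ : Measure E}

lemma inner_eq_integral (f g : Lp ℝ 2 μ) : ⟪f, g⟫ = ∫ x, f x * g x ∂μ := by
  rw [MeasureTheory.L2.inner_def]
  simp [RCLike.inner_apply]
  congr 1; ext x; ring

lemma coeFn_toL2 {u : E → ℝ} (h : MemLp u 2 μ) : (toL2 μ u : E → ℝ) =ᵐ[μ] u := by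
  rw [toL2, dif_pos h]; exact h.coeFn_toLp

lemma toL2_congr {u v : E → ℝ} (h : MemLp u 2 μ) (huv : u =ᵐ[μ] v) :
    toL2 μ u = toL2 μ v := by
  rw [toL2, toL2, dif_pos h, dif_pos (h.ae_eq huv)]
  exact MemLp.toLp_congr _ _ huv

lemma gen_spec (sg : Semigroup2 μ) {f : Lp ℝ 2 μ} (h : sg.memDom f) :
    Tendsto (fun t : ℝ => t⁻¹ • (sg.T t f - f)) (𝓝[>] (0:ℝ)) (𝓝 (sg.gen f)) := by
  rw [Semigroup2.gen, dif_pos h]; exact h.choose_spec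

lemma gen'_spec (sg : Semigroup2 μ) {f : Lp ℝ 2 μ} (h : sg.memDom' f) :
    Tendsto (fun t : ℝ => t⁻¹ • (sg.dual t f - f)) (𝓝[>] (0:ℝ)) (𝓝 (sg.gen' f)) := by
  rw [Semigroup2.gen', dif_pos h]; exact h.choose_spec

/-- a.e. bound for an `L∞` function. -/
lemma memℒp_top_ae_bound {f : E → ℝ} (h : MemLp f ⊤ μ) :
    ∃ C : ℝ, 0 ≤ C ∧ ∀ᵐ x ∂μ, |f x| ≤ C := by
  refine ⟨(eLpNormEssSup f μ).toReal, ENNReal.toReal_nonneg, ?_⟩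
  have h2 := h.2
  rw [eLpNorm_exponent_top] at h2
  filter_upwards [ae_le_eLpNormEssSup (f := f) (μ := μ)] with x hx
  have : (ENNReal.ofNNReal ‖f x‖₊).toReal ≤ (eLpNormEssSup f μ).toReal :=
    ENNReal.toReal_mono h2.ne hx
  simpa [Real.norm_eq_abs] using this

variable [IsProbabilityMeasure μ]

lemma memℒp_two_of_bound {u : E → ℝ} (hm : Measurable u) {C : ℝ} (hC : ∀ x, |u x| ≤ C) :
    MemLp u 2 μ :=
  (memLp_top_of_bound hm.aestronglyMeasurable C
    (Eventually.of_forall fun x => by simpa [Real.norm_eq_abs] using hC x)).mono_exponent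
    le_top

lemma keyIneq (sg : Semigroup2 μ) (q : ℝ → ProbabilityTheory.Kernel E E)
    (hM : ∀ t, ProbabilityTheory.IsMarkovKernel (q t))
    (hker : ∀ t : ℝ, 0 ≤ t → ∀ f : E → ℝ, Measurable f → (∃ C : ℝ, ∀ x, |f x| ≤ C) →
      sg.Tf t f =ᵐ[μ] fun x => ∫ y, f y ∂(q t x))
    {t : ℝ} (ht : 0 ≤ t) {u : E → ℝ} (hm : Measurable u) {C : ℝ} (hC : ∀ x, |u x| ≤ C) :
    (1/2) * ⟪toL2 μ (fun x => u x ^ 2), toL2 μ (one E) - sg.dual t (toL2 μ (one E))⟫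
      ≤ ⟪toL2 μ u - sg.T t (toL2 μ u), toL2 μ u⟫ := by
  have hu2 : MemLp u 2 μ := memℒp_two_of_bound hm hC
  have hsqm : Measurable fun x => u x ^ 2 := hm.pow_const 2
  have hCsq : ∀ x, |u x ^ 2| ≤ C ^ 2 := fun x => by
    rw [abs_pow]; exact pow_le_pow_left₀ (abs_nonneg _) (hC x) 2
  have hsq2 : MemLp (fun x => u x ^ 2) 2 μ := memℒp_two_of_bound hsqm hCsq
  set U := toL2 μ u with hU
  set SQ := toL2 μ (fun x => u x ^ 2) with hSQ
  set o := toL2 μ (one E) with ho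
  have hone2 : MemLp (one E) 2 μ := memLp_const 1
  have hkerU := hker t ht u hm ⟨C, hC⟩
  have hkerSQ := hker t ht (fun x => u x ^ 2) hsqm ⟨C ^ 2, hCsq⟩
  simp only [Semigroup2.Tf] at hkerU hkerSQ
  have iTU : Integrable (⇑(sg.T t U)) μ := (Lp.memLp _).integrable one_le_two
  have iTSQ : Integrable (⇑(sg.T t SQ)) μ := (Lp.memLp _).integrable one_le_two
  have iSQ : Integrable (fun x => u x ^ 2) μ := hsq2.integrable one_le_two
  -- pointwise inequality via the kernel
  have hpt : ∀ᵐ x ∂μ, (sg.T t U) x * u x ≤ (1/2) * u x ^ 2 + (1/2) * (sg.T t SQ) x := by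
    filter_upwards [hkerU, hkerSQ] with x h1 h2
    rw [h1, h2]
    haveI : IsProbabilityMeasure ((q t) x) := (hM t).isProbabilityMeasure x
    have iu : Integrable u ((q t) x) :=
      (memLp_top_of_bound hm.aestronglyMeasurable C
        (Eventually.of_forall fun y => by simpa [Real.norm_eq_abs] using hC y)).integrable le_top
    have iusq : Integrable (fun y => u y ^ 2) ((q t) x) :=
      (memLp_top_of_bound hsqm.aestronglyMeasurable (C ^ 2)
        (Eventually.of_forall fun y => by simpa [Real.norm_eq_abs] using hCsq y)).integrable le_top
    calc (∫ y, u y ∂(q t) x) * u x = ∫ y, u y * u x ∂(q t) x := (integral_mul_const _ _).symm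
      _ ≤ ∫ y, ((1/2) * u y ^ 2 + (1/2) * u x ^ 2) ∂(q t) x := by
          refine integral_mono (iu.mul_const _) ?_ (fun y => by nlinarith [sq_nonneg (u y - u x)])
          exact (iusq.const_mul _).add (integrable_const _)
      _ = (1/2) * u x ^ 2 + (1/2) * ∫ y, u y ^ 2 ∂(q t) x := by
          rw [integral_add (iusq.const_mul _) (integrable_const _), integral_const_mul,
            integral_const]
          simp [measure_univ]
          ring
  -- integrate
  have ileft : Integrable (fun x => (sg.T t U) x * u x) μ := by
    refine (iTU.bdd_mul (c := C) hm.aestronglyMeasurable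
      (Eventually.of_forall fun x => by simpa [Real.norm_eq_abs] using hC x)).congr ?_
    exact Eventually.of_forall fun x => mul_comm _ _
  have iright : Integrable (fun x => (1/2) * u x ^ 2 + (1/2) * (sg.T t SQ) x) μ :=
    (iSQ.const_mul _).add (iTSQ.const_mul _)
  have hInt : ∫ x, (sg.T t U) x * u x ∂μ
      ≤ ∫ x, ((1/2) * u x ^ 2 + (1/2) * (sg.T t SQ) x) ∂μ :=
    integral_mono_ae ileft iright hpt
  rw [integral_add (iSQ.const_mul _) (iTSQ.const_mul _), integral_const_mul,
    integral_const_mul] at hInt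
  -- rewrite the inner products as integrals
  have hUU : ⟪U, U⟫ = ∫ x, u x ^ 2 ∂μ := by
    rw [inner_eq_integral]
    refine integral_congr_ae ?_
    filter_upwards [coeFn_toL2 hu2] with x hx
    rw [hx]; ring
  have hTUU : ⟪sg.T t U, U⟫ = ∫ x, (sg.T t U) x * u x ∂μ := by
    rw [inner_eq_integral]
    refine integral_congr_ae ?_
    filter_upwards [coeFn_toL2 hu2] with x hx
    rw [hx]
  have hSQo : ⟪SQ, o⟫ = ∫ x, u x ^ 2 ∂μ := by
    rw [inner_eq_integral]
    refine integral_congr_ae ?_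
    filter_upwards [coeFn_toL2 hsq2, coeFn_toL2 hone2] with x hx hy
    rw [hx, hy, one, mul_one]
  have hSQd : ⟪SQ, sg.dual t o⟫ = ∫ x, (sg.T t SQ) x ∂μ := by
    rw [Semigroup2.dual, ContinuousLinearMap.adjoint_inner_right, inner_eq_integral]
    refine integral_congr_ae ?_
    filter_upwards [coeFn_toL2 hone2] with x hx
    rw [hx, one, mul_one]
  rw [inner_sub_right, inner_sub_left, hUU, hTUU, hSQo, hSQd]
  linarith

lemma hatS_nonneg_of_bounded (sg : Semigroup2 μ) (q : ℝ → ProbabilityTheory.Kernel E E)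
    (hM : ∀ t, ProbabilityTheory.IsMarkovKernel (q t))
    (hker : ∀ t : ℝ, 0 ≤ t → ∀ f : E → ℝ, Measurable f → (∃ C : ℝ, ∀ x, |f x| ≤ C) →
      sg.Tf t f =ᵐ[μ] fun x => ∫ y, f y ∂(q t x))
    (hdom' : sg.memDom' (toL2 μ (one E)))
    {u : E → ℝ} (hm : Measurable u) {C : ℝ} (hC : ∀ x, |u x| ≤ C)
    (hmemD : sg.memD u) : 0 ≤ hatS sg u u := by
  have hu2 : MemLp u 2 μ := memℒp_two_of_bound hm hC
  have hsqm : Measurable fun x => u x ^ 2 := hm.pow_const 2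
  have hCsq : ∀ x, |u x ^ 2| ≤ C ^ 2 := fun x => by
    rw [abs_pow]; exact pow_le_pow_left₀ (abs_nonneg _) (hC x) 2
  have hsq2 : MemLp (fun x => u x ^ 2) 2 μ := memℒp_two_of_bound hsqm hCsq
  set U := toL2 μ u with hU
  set SQ := toL2 μ (fun x => u x ^ 2) with hSQ
  set o := toL2 μ (one E) with ho
  have hlimA : Tendsto (fun t : ℝ => t⁻¹ • (sg.T t U - U)) (𝓝[>] (0:ℝ)) (𝓝 (sg.gen U)) :=
    gen_spec sg hmemD
  have hlim' : Tendsto (fun t : ℝ => t⁻¹ • (sg.dual t o - o)) (𝓝[>] (0:ℝ))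
      (𝓝 (sg.gen' o)) := gen'_spec sg hdom'
  -- eventual inequality
  have hev : ∀ᶠ t : ℝ in 𝓝[>] (0:ℝ),
      ⟪t⁻¹ • (sg.T t U - U), U⟫ ≤ (1/2) * ⟪SQ, t⁻¹ • (sg.dual t o - o)⟫ := by
    refine Filter.eventually_of_mem (self_mem_nhdsWithin) (fun t ht => ?_)
    have ht' : (0:ℝ) < t := ht
    have key := keyIneq sg q hM hker ht'.le hm hC
    rw [real_inner_smul_left, real_inner_smul_right]
    have h1 : ⟪U - sg.T t U, U⟫ = -⟪sg.T t U - U, U⟫ := by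
      rw [← neg_sub, inner_neg_left]
    have h2 : ⟪SQ, o - sg.dual t o⟫ = -⟪SQ, sg.dual t o - o⟫ := by
      rw [← neg_sub (sg.dual t o) o, inner_neg_right]
    rw [h1, h2] at key
    have := mul_le_mul_of_nonneg_left key (inv_nonneg.2 ht'.le)
    nlinarith
  -- pass to the limit
  have hFl : Tendsto (fun t : ℝ => ⟪t⁻¹ • (sg.T t U - U), U⟫) (𝓝[>] (0:ℝ))
      (𝓝 ⟪sg.gen U, U⟫) := hlimA.inner tendsto_const_nhds
  have hGl : Tendsto (fun t : ℝ => (1/2) * ⟪SQ, t⁻¹ • (sg.dual t o - o)⟫) (𝓝[>] (0:ℝ))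
      (𝓝 ((1/2) * ⟪SQ, sg.gen' o⟫)) := (tendsto_const_nhds.inner hlim').const_mul _
  have hfin : ⟪sg.gen U, U⟫ ≤ (1/2) * ⟪SQ, sg.gen' o⟫ :=
    le_of_tendsto_of_tendsto hFl hGl hev
  -- rewrite hatS
  have hS : sg.S u u = -⟪sg.gen U, U⟫ := by
    rw [Semigroup2.S, ip, inner_eq_integral, ← integral_neg]
    refine integral_congr_ae ?_
    filter_upwards [coeFn_toL2 hu2] with x hx
    simp only [Semigroup2.Af]
    rw [hx]; ring
  have hB : ip μ (fun x => sg.Af' (one E) x * u x) u = ⟪SQ, sg.gen' o⟫ := by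
    rw [ip, inner_eq_integral]
    refine integral_congr_ae ?_
    filter_upwards [coeFn_toL2 hsq2] with x hy
    simp only [Semigroup2.Af']
    rw [hy]; ring
  rw [hatS, hS, hB]
  linarith

lemma integrable_mul_L2 {f g : E → ℝ} (hf : MemLp f 2 μ) (hg : MemLp g 2 μ) :
    Integrable (fun x => f x * g x) μ := by
  haveI : ENNReal.HolderTriple 2 2 1 := ⟨by simp [one_div, ENNReal.inv_two_add_inv_two]⟩
  have h := hg.smul (𝕜 := ℝ) hf (r := 1)
  rw [memLp_one_iff_integrable] at h
  exact h.congr (Eventually.of_forall fun x => by simp [mul_comm])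

lemma integrable_sq_of_L2 {f : E → ℝ} (hf : MemLp f 2 μ) :
    Integrable (fun x => f x ^ 2) μ := by
  have := hf.integrable_sq; simpa [sq] using this

lemma keyIneq' (sg : Semigroup2 μ) (q : ℝ → ProbabilityTheory.Kernel E E)
    (hM : ∀ t, ProbabilityTheory.IsMarkovKernel (q t))
    (hker : ∀ t : ℝ, 0 ≤ t → ∀ f : E → ℝ, Measurable f → (∃ C : ℝ, ∀ x, |f x| ≤ C) →
      sg.Tf t f =ᵐ[μ] fun x => ∫ y, f y ∂(q t x))
    {t : ℝ} (ht : 0 ≤ t)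
    (hbd : MemLp (⇑(sg.dual t (toL2 μ (one E)))) ⊤ μ)
    {u : E → ℝ} (hu2 : MemLp u 2 μ) :
    (1/2) * ∫ x, u x ^ 2 * (1 - (sg.dual t (toL2 μ (one E))) x) ∂μ
      ≤ ⟪toL2 μ u - sg.T t (toL2 μ u), toL2 μ u⟫ := by
  obtain ⟨D, hD0, hDbd⟩ := memℒp_top_ae_bound hbd
  set o := toL2 μ (one E) with ho
  set h : E → ℝ := ⇑(sg.dual t o) with hh
  -- measurable representative
  set w : E → ℝ := hu2.1.mk u with hw
  have hm : Measurable w := hu2.1.stronglyMeasurable_mk.measurable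
  have huw : u =ᵐ[μ] w := hu2.1.ae_eq_mk
  have hw2 : MemLp w 2 μ := hu2.ae_eq huw
  have hUeq : toL2 μ u = toL2 μ w := toL2_congr hu2 huw
  -- truncations
  set v : ℕ → E → ℝ := fun k x => max (-(k:ℝ)) (min (w x) k) with hv
  have hvm : ∀ k, Measurable (v k) := fun k =>
    measurable_const.max (hm.min measurable_const)
  have hvb : ∀ k x, |v k x| ≤ (k:ℝ) := fun k x => by
    rw [abs_le]
    exact ⟨le_max_left _ _, max_le (le_trans (neg_nonpos.2 (Nat.cast_nonneg k))
      (Nat.cast_nonneg k)) (min_le_right _ _)⟩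
  have hvabs : ∀ k x, |v k x| ≤ |w x| := fun k x => by
    rw [abs_le]
    constructor
    · exact le_max_of_le_right (le_min (neg_abs_le _)
        (le_trans (neg_nonpos.2 (abs_nonneg _)) (Nat.cast_nonneg k)))
    · exact max_le (le_trans (neg_nonpos.2 (Nat.cast_nonneg k)) (abs_nonneg _))
        (le_trans (min_le_left _ _) (le_abs_self _))
  have hptlim : ∀ x, Tendsto (fun k => v k x) atTop (𝓝 (w x)) := by
    intro x
    refine tendsto_atTop_of_eventually_const (i₀ := ⌈|w x|⌉₊) fun k hk => ?_
    have hk' : |w x| ≤ (k:ℝ) := le_trans (Nat.le_ceil _) (by exact_mod_cast hk)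
    rw [abs_le] at hk'
    rw [hv]
    simp only [min_eq_left hk'.2, max_eq_right hk'.1]
  have hv2 : ∀ k, MemLp (v k) 2 μ := fun k => memℒp_two_of_bound (hvm k) (hvb k)
  -- convergence in L²
  have hUk : Tendsto (fun k => toL2 μ (v k)) atTop (𝓝 (toL2 μ w)) := by
    rw [tendsto_iff_norm_sub_tendsto_zero]
    have hIk : Tendsto (fun k => ∫ x, (v k x - w x) ^ 2 ∂μ) atTop (𝓝 0) := by
      have h0 : (0:ℝ) = ∫ x, (0:ℝ) ∂μ := by simp
      rw [h0]
      refine tendsto_integral_of_dominated_convergence (fun x => 4 * w x ^ 2)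
        (fun k => (((hvm k).sub hm).pow_const 2).aestronglyMeasurable)
        ((integrable_sq_of_L2 hw2).const_mul 4) (fun k => ?_) ?_
      · refine Eventually.of_forall fun x => ?_
        have h1 : |v k x - w x| ≤ 2 * |w x| := by
          have := hvabs k x
          have h2 := abs_sub_abs_le_abs_sub (v k x) (w x)
          calc |v k x - w x| ≤ |v k x| + |w x| := abs_sub _ _
            _ ≤ 2 * |w x| := by linarith
        have : (v k x - w x) ^ 2 ≤ (2 * |w x|) ^ 2 := by
          rw [← sq_abs]; exact pow_le_pow_left₀ (abs_nonneg _) h1 2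
        rw [Real.norm_eq_abs, abs_of_nonneg (sq_nonneg _)]
        calc (v k x - w x) ^ 2 ≤ (2 * |w x|) ^ 2 := this
          _ = 4 * w x ^ 2 := by rw [mul_pow, sq_abs]; ring
      · refine Eventually.of_forall fun x => ?_
        have h1 := (hptlim x).sub (tendsto_const_nhds (x := w x))
        rw [sub_self] at h1
        simpa using h1.pow 2
    have hnorm : ∀ k, ‖toL2 μ (v k) - toL2 μ w‖ = Real.sqrt (∫ x, (v k x - w x) ^ 2 ∂μ) := by
      intro k
      rw [norm_eq_sqrt_real_inner (toL2 μ (v k) - toL2 μ w), inner_eq_integral]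
      congr 1
      refine integral_congr_ae ?_
      filter_upwards [Lp.coeFn_sub (toL2 μ (v k)) (toL2 μ w), coeFn_toL2 (hv2 k),
        coeFn_toL2 hw2] with x h1 h2 h3
      rw [h1]
      simp only [Pi.sub_apply]
      rw [h2, h3]; ring
    have : Tendsto (fun k => Real.sqrt (∫ x, (v k x - w x) ^ 2 ∂μ)) atTop (𝓝 0) := by
      have := (Real.continuous_sqrt.tendsto 0).comp hIk
      simpa [Function.comp_def] using this
    exact this.congr fun k => (hnorm k).symm
  -- pass to the limit in keyIneq
  have hRlim : Tendsto (fun k => ⟪toL2 μ (v k) - sg.T t (toL2 μ (v k)), toL2 μ (v k)⟫)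
      atTop (𝓝 ⟪toL2 μ w - sg.T t (toL2 μ w), toL2 μ w⟫) := by
    have hT : Tendsto (fun k => sg.T t (toL2 μ (v k))) atTop (𝓝 (sg.T t (toL2 μ w))) :=
      ((sg.T t).continuous.tendsto _).comp hUk
    exact (hUk.sub hT).inner hUk
  have hLlim : Tendsto (fun k => ∫ x, v k x ^ 2 * (1 - h x) ∂μ) atTop
      (𝓝 (∫ x, w x ^ 2 * (1 - h x) ∂μ)) := by
    refine tendsto_integral_of_dominated_convergence (fun x => w x ^ 2 * (1 + D))
      (fun k => (((hvm k).pow_const 2).aestronglyMeasurable.mul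
        (aestronglyMeasurable_const.sub (Lp.aestronglyMeasurable _)))) ?_ (fun k => ?_) ?_
    · exact (integrable_sq_of_L2 hw2).mul_const _
    · filter_upwards [hDbd] with x hx
      rw [Real.norm_eq_abs, abs_mul]
      have h1 : |v k x ^ 2| ≤ w x ^ 2 := by
        rw [abs_of_nonneg (sq_nonneg _), ← sq_abs (w x), ← sq_abs (v k x)]
        exact pow_le_pow_left₀ (abs_nonneg _) (hvabs k x) 2
      have h2 : |1 - h x| ≤ 1 + D := by
        rw [abs_sub_comm]
        have h3 := abs_sub (h x) 1
        rw [abs_one] at h3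
        linarith
      exact mul_le_mul h1 h2 (abs_nonneg _) (sq_nonneg _)
    · refine Eventually.of_forall fun x => ?_
      exact (((hptlim x).pow 2).mul_const _)
  have hev : ∀ k, (1/2) * ∫ x, v k x ^ 2 * (1 - h x) ∂μ
      ≤ ⟪toL2 μ (v k) - sg.T t (toL2 μ (v k)), toL2 μ (v k)⟫ := by
    intro k
    have key := keyIneq sg q hM hker ht (hvm k) (hvb k)
    refine le_trans (le_of_eq ?_) key
    congr 1
    rw [inner_eq_integral]
    refine integral_congr_ae ?_
    filter_upwards [coeFn_toL2 (memℒp_two_of_bound ((hvm k).pow_const 2)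
        (fun x => by rw [abs_pow]; exact pow_le_pow_left₀ (abs_nonneg _) (hvb k x) 2)),
      Lp.coeFn_sub (toL2 μ (one E)) (sg.dual t (toL2 μ (one E))),
      coeFn_toL2 (u := one E) (memLp_const 1)] with x h1 h2 h3
    rw [h2]
    simp only [Pi.sub_apply]
    rw [h1, h3]
    simp only [one, hh, ho]
  have hfin := le_of_tendsto_of_tendsto (hLlim.const_mul (1/2)) hRlim
      (Eventually.of_forall hev)
  rw [hUeq]
  refine le_trans (le_of_eq ?_) hfin
  congr 1
  refine integral_congr_ae ?_
  filter_upwards [huw] with x hx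
  rw [hx]

lemma S_eq (sg : Semigroup2 μ) {u : E → ℝ} (hu2 : MemLp u 2 μ) :
    sg.S u u = -⟪sg.gen (toL2 μ u), toL2 μ u⟫ := by
  rw [Semigroup2.S, ip, inner_eq_integral, ← integral_neg]
  refine integral_congr_ae ?_
  filter_upwards [coeFn_toL2 hu2] with x hx
  simp only [Semigroup2.Af]
  rw [hx]; ring

lemma hatS_nonneg_zero (sg : Semigroup2 μ) (q : ℝ → ProbabilityTheory.Kernel E E)
    (hM : ∀ t, ProbabilityTheory.IsMarkovKernel (q t))
    (hker : ∀ t : ℝ, 0 ≤ t → ∀ f : E → ℝ, Measurable f → (∃ C : ℝ, ∀ x, |f x| ≤ C) →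
      sg.Tf t f =ᵐ[μ] fun x => ∫ y, f y ∂(q t x))
    (hbd : ∀ t : ℝ, 0 ≤ t → MemLp (⇑(sg.dual t (toL2 μ (one E)))) ⊤ μ)
    (hlim : Tendsto (fun t : ℝ => eLpNorm (fun x =>
        t⁻¹ * ((sg.dual t (toL2 μ (one E))) x - 1) - (sg.gen' (toL2 μ (one E))) x) ⊤ μ)
      (𝓝[>] (0:ℝ)) (𝓝 0))
    {u : E → ℝ} (hu2 : MemLp u 2 μ) (hmemD : sg.memD u) : 0 ≤ hatS sg u u := by
  set o := toL2 μ (one E) with ho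
  set a' : E → ℝ := ⇑(sg.gen' o) with ha'
  set g : ℝ → E → ℝ := fun t x => t⁻¹ * ((sg.dual t o) x - 1) - a' x with hg
  have hgmeas : ∀ t : ℝ, AEStronglyMeasurable (g t) μ := fun t =>
    ((aestronglyMeasurable_const.mul ((Lp.aestronglyMeasurable _).sub
      aestronglyMeasurable_const)).sub (Lp.aestronglyMeasurable _))
  have hev0 : ∀ᶠ t : ℝ in 𝓝[>] (0:ℝ), eLpNorm (g t) ⊤ μ < 1 := by
    refine hlim.eventually_lt_const ?_
    exact zero_lt_one
  -- a' is essentially bounded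
  have ha'top : MemLp a' ⊤ μ := by
    obtain ⟨t0, ht0S, ht0pos⟩ := (hev0.and eventually_mem_nhdsWithin).exists
    have h1 : MemLp (fun x => t0⁻¹ * ((sg.dual t0 o) x - 1)) ⊤ μ :=
      (((hbd t0 (le_of_lt ht0pos)).sub (memLp_const 1)).const_mul t0⁻¹)
    have h2 : MemLp (g t0) ⊤ μ := ⟨hgmeas t0, by
      rw [eLpNorm_exponent_top] at ht0S ⊢
      exact ht0S.trans ENNReal.one_lt_top⟩
    have h3 := h1.sub h2
    refine h3.ae_eq (Eventually.of_forall fun x => ?_)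
    simp only [Pi.sub_apply, hg]
    ring
  obtain ⟨Da, hDa0, hDa⟩ := memℒp_top_ae_bound ha'top
  have iu2 : Integrable (fun x => u x ^ 2) μ := integrable_sq_of_L2 hu2
  have iA : Integrable (fun x => u x ^ 2 * a' x) μ := by
    refine (iu2.bdd_mul (c := Da) (Lp.aestronglyMeasurable _)
      (hDa.mono fun x hx => by simpa [Real.norm_eq_abs] using hx)).congr ?_
    exact Eventually.of_forall fun x => mul_comm _ _
  set U := toL2 μ u with hU
  have hlimA : Tendsto (fun t : ℝ => t⁻¹ • (sg.T t U - U)) (𝓝[>] (0:ℝ)) (𝓝 (sg.gen U)) :=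
    gen_spec sg hmemD
  -- eventual inequality
  have hev : ∀ᶠ t : ℝ in 𝓝[>] (0:ℝ),
      ⟪t⁻¹ • (sg.T t U - U), U⟫
        ≤ (1/2) * ((∫ x, u x ^ 2 * g t x ∂μ) + ∫ x, u x ^ 2 * a' x ∂μ) := by
    filter_upwards [eventually_mem_nhdsWithin, hev0] with t htpos htS
    have ht : (0:ℝ) < t := htpos
    have hgt : MemLp (g t) ⊤ μ := ⟨hgmeas t, by
      rw [eLpNorm_exponent_top] at htS ⊢
      exact htS.trans ENNReal.one_lt_top⟩
    obtain ⟨Dg, hDg0, hDg⟩ := memℒp_top_ae_bound hgt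
    have igt : Integrable (fun x => u x ^ 2 * g t x) μ := by
      refine (iu2.bdd_mul (c := Dg) (hgmeas t)
        (hDg.mono fun x hx => by simpa [Real.norm_eq_abs] using hx)).congr ?_
      exact Eventually.of_forall fun x => mul_comm _ _
    have key := keyIneq' sg q hM hker ht.le (hbd t ht.le) hu2
    have key2 := mul_le_mul_of_nonneg_left key (inv_nonneg.2 ht.le)
    have eq1 : t⁻¹ * ∫ x, u x ^ 2 * (1 - (sg.dual t (toL2 μ (one E))) x) ∂μ
        = -((∫ x, u x ^ 2 * g t x ∂μ) + ∫ x, u x ^ 2 * a' x ∂μ) := by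
      rw [← integral_const_mul, ← integral_add igt iA, ← integral_neg]
      refine integral_congr_ae (Eventually.of_forall fun x => ?_)
      simp only [hg, ← ho]
      ring
    have eq2 : ⟪U - sg.T t U, U⟫ = -⟪sg.T t U - U, U⟫ := by
      rw [← neg_sub, inner_neg_left]
    rw [eq2] at key2
    rw [real_inner_smul_left]
    nlinarith [eq1, key2]
  -- limits
  have hFl : Tendsto (fun t : ℝ => ⟪t⁻¹ • (sg.T t U - U), U⟫) (𝓝[>] (0:ℝ))
      (𝓝 ⟪sg.gen U, U⟫) := hlimA.inner tendsto_const_nhds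
  have hsqueeze : Tendsto (fun t : ℝ => ∫ x, u x ^ 2 * g t x ∂μ) (𝓝[>] (0:ℝ)) (𝓝 0) := by
    have hb : Tendsto (fun t : ℝ => (eLpNorm (g t) ⊤ μ).toReal * ∫ x, u x ^ 2 ∂μ)
        (𝓝[>] (0:ℝ)) (𝓝 0) := by
      have h1 : Tendsto (fun t : ℝ => (eLpNorm (g t) ⊤ μ).toReal) (𝓝[>] (0:ℝ)) (𝓝 0) := by
        have := (ENNReal.tendsto_toReal (a := 0) (by simp)).comp hlim
        simpa [Function.comp_def, hg] using this
      simpa using h1.mul_const _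
    refine squeeze_zero_norm' ?_ hb
    filter_upwards [hev0] with t htS
    have hgt : MemLp (g t) ⊤ μ := ⟨hgmeas t, by
      rw [eLpNorm_exponent_top] at htS ⊢
      exact htS.trans ENNReal.one_lt_top⟩
    have hgb : ∀ᵐ x ∂μ, |g t x| ≤ (eLpNorm (g t) ⊤ μ).toReal := by
      rw [eLpNorm_exponent_top]
      filter_upwards [ae_le_eLpNormEssSup (f := g t) (μ := μ)] with x hx
      have h2 : eLpNormEssSup (g t) μ ≠ ⊤ := by
        rw [eLpNorm_exponent_top] at htS
        exact (htS.trans ENNReal.one_lt_top).ne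
      have := ENNReal.toReal_mono h2 hx
      simpa [Real.norm_eq_abs] using this
    have igt : Integrable (fun x => u x ^ 2 * g t x) μ := by
      refine (iu2.bdd_mul (c := (eLpNorm (g t) ⊤ μ).toReal) (hgmeas t)
        (hgb.mono fun x hx => by simpa [Real.norm_eq_abs] using hx)).congr ?_
      exact Eventually.of_forall fun x => mul_comm _ _
    calc ‖∫ x, u x ^ 2 * g t x ∂μ‖ ≤ ∫ x, ‖u x ^ 2 * g t x‖ ∂μ :=
          norm_integral_le_integral_norm _
      _ ≤ ∫ x, u x ^ 2 * (eLpNorm (g t) ⊤ μ).toReal ∂μ := by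
          refine integral_mono_ae igt.norm (iu2.mul_const _) ?_
          filter_upwards [hgb] with x hx
          rw [norm_mul, Real.norm_eq_abs, Real.norm_eq_abs, abs_of_nonneg (sq_nonneg _)]
          exact mul_le_mul_of_nonneg_left hx (sq_nonneg _)
      _ = (eLpNorm (g t) ⊤ μ).toReal * ∫ x, u x ^ 2 ∂μ := by
          rw [integral_mul_const]; ring
  have hGl : Tendsto (fun t : ℝ =>
      (1/2) * ((∫ x, u x ^ 2 * g t x ∂μ) + ∫ x, u x ^ 2 * a' x ∂μ)) (𝓝[>] (0:ℝ))
      (𝓝 ((1/2) * ((0:ℝ) + ∫ x, u x ^ 2 * a' x ∂μ))) :=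
    ((hsqueeze.add tendsto_const_nhds).const_mul _)
  have hfin : ⟪sg.gen U, U⟫ ≤ (1/2) * ((0:ℝ) + ∫ x, u x ^ 2 * a' x ∂μ) :=
    le_of_tendsto_of_tendsto hFl hGl hev
  rw [zero_add] at hfin
  -- conclude
  have hS := S_eq sg hu2
  have hB : ip μ (fun x => sg.Af' (one E) x * u x) u = ∫ x, u x ^ 2 * a' x ∂μ := by
    rw [ip]
    refine integral_congr_ae (Eventually.of_forall fun x => ?_)
    simp only [Semigroup2.Af', ← ho, ← ha']
    ring
  rw [hatS, hS, hB]
  linarith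

lemma hatS_formula (sg : Semigroup2 μ) {v : E → ℝ} (hv2 : MemLp v 2 μ) :
    hatS sg v v = -⟪sg.gen (toL2 μ v), toL2 μ v⟫
      + (1/2) * ∫ x, ((toL2 μ v : E → ℝ) x) ^ 2 * ((sg.gen' (toL2 μ (one E)) : E → ℝ) x) ∂μ := by
  rw [hatS, S_eq sg hv2, ip]
  congr 2
  refine integral_congr_ae ?_
  filter_upwards [coeFn_toL2 hv2] with x hx
  simp only [Semigroup2.Af']
  rw [hx]; ring

set_option maxHeartbeats 2000000 in
lemma hatS_nonneg_dense (sg : Semigroup2 μ) (q : ℝ → ProbabilityTheory.Kernel E E)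
    (hM : ∀ t, ProbabilityTheory.IsMarkovKernel (q t))
    (hker : ∀ t : ℝ, 0 ≤ t → ∀ f : E → ℝ, Measurable f → (∃ C : ℝ, ∀ x, |f x| ≤ C) →
      sg.Tf t f =ᵐ[μ] fun x => ∫ y, f y ∂(q t x))
    (hdom' : sg.memDom' (toL2 μ (one E)))
    {M : ℝ} (hMb : eLpNorm (⇑(sg.gen' (toL2 μ (one E)))) ⊤ μ ≤ ENNReal.ofReal M)
    (Dn : Set (E → ℝ))
    (hDn : ∀ f ∈ Dn, MemLp f 2 μ ∧ MemLp f ⊤ μ ∧ sg.memD f)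
    (happrox : ∀ u : E → ℝ, MemLp u 2 μ → sg.memD u → ∀ ε : ℝ, 0 < ε →
      ∃ f ∈ Dn, ip μ (fun x => u x - f x) (fun x => u x - f x)
        + ip μ (fun x => sg.Af u x - sg.Af f x) (fun x => sg.Af u x - sg.Af f x) < ε)
    {u : E → ℝ} (hu2 : MemLp u 2 μ) (hmemD : sg.memD u) : 0 ≤ hatS sg u u := by
  set a' : E → ℝ := ⇑(sg.gen' (toL2 μ (one E))) with ha'
  set M' : ℝ := max M 0 with hM'
  have hM'0 : 0 ≤ M' := le_max_right _ _
  have ha'bd : ∀ᵐ x ∂μ, |a' x| ≤ M' := by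
    have h1 : eLpNormEssSup a' μ ≤ ENNReal.ofReal M' := by
      rw [← eLpNorm_exponent_top]
      exact hMb.trans (ENNReal.ofReal_le_ofReal (le_max_left _ _))
    filter_upwards [ae_le_eLpNormEssSup (f := a') (μ := μ)] with x hx
    have h2 := ENNReal.toReal_mono ENNReal.ofReal_ne_top (hx.trans h1)
    rw [ENNReal.toReal_ofReal hM'0] at h2
    simpa [Real.norm_eq_abs] using h2
  suffices hsuf : ∀ ε : ℝ, 0 < ε → -ε ≤ hatS sg u u by
    by_contra hcon
    push_neg at hcon
    have := hsuf (-(hatS sg u u)/2) (by linarith)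
    linarith
  intro ε hε
  set U := toL2 μ u with hU
  set GU := sg.gen U with hGU
  set K : ℝ := ‖U‖ + ‖GU‖ + 1 + (1/2) * M' * (2*‖U‖+1) with hK
  have hK0 : 0 ≤ K := by positivity
  set δ : ℝ := min 1 (ε/(K+1)) with hδ
  have hδ0 : 0 < δ := lt_min one_pos (by positivity)
  have hδ1 : δ ≤ 1 := min_le_left _ _
  have hδK : δ * (K+1) ≤ ε := by
    have h1 : δ ≤ ε/(K+1) := min_le_right _ _
    have h2 : (0:ℝ) < K + 1 := by linarith
    calc δ * (K+1) ≤ (ε/(K+1)) * (K+1) := mul_le_mul_of_nonneg_right h1 h2.le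
      _ = ε := by field_simp
  obtain ⟨f, hfDn, hip⟩ := happrox u hu2 hmemD (δ^2) (by positivity)
  obtain ⟨hf2, hftop, hfD⟩ := hDn f hfDn
  set F := toL2 μ f with hF
  set GF := sg.gen F with hGF
  -- the two graph-norm bounds
  have hip1 : ip μ (fun x => u x - f x) (fun x => u x - f x) = ‖U - F‖ * ‖U - F‖ := by
    rw [← @real_inner_self_eq_norm_mul_norm, inner_eq_integral, ip]
    refine (integral_congr_ae ?_).symm
    filter_upwards [Lp.coeFn_sub U F, coeFn_toL2 hu2, coeFn_toL2 hf2] with x h1 h2 h3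
    rw [h1]
    simp only [Pi.sub_apply]
    rw [h2, h3]
  have hip2 : ip μ (fun x => sg.Af u x - sg.Af f x) (fun x => sg.Af u x - sg.Af f x)
      = ‖GU - GF‖ * ‖GU - GF‖ := by
    rw [← @real_inner_self_eq_norm_mul_norm, inner_eq_integral, ip]
    refine (integral_congr_ae ?_).symm
    filter_upwards [Lp.coeFn_sub GU GF] with x h1
    rw [h1]
    simp only [Pi.sub_apply, Semigroup2.Af]
    rfl
  have hUF : ‖U - F‖ ≤ δ := by
    nlinarith [norm_nonneg (U - F), norm_nonneg (GU - GF), hip, hip1.symm.trans_le le_rfl]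
  have hGUF : ‖GU - GF‖ ≤ δ := by
    nlinarith [norm_nonneg (U - F), norm_nonneg (GU - GF), hip]
  -- bounded measurable representative of f
  obtain ⟨Cb, hCb0, hCb⟩ := memℒp_top_ae_bound hftop
  set w : E → ℝ := hf2.1.mk f with hw
  have hwm : Measurable w := hf2.1.stronglyMeasurable_mk.measurable
  have hfw : f =ᵐ[μ] w := hf2.1.ae_eq_mk
  have hCbw : ∀ᵐ x ∂μ, |w x| ≤ Cb := by
    filter_upwards [hfw, hCb] with x h1 h2; rw [← h1]; exact h2
  set gg : E → ℝ := fun x => max (-Cb) (min (w x) Cb) with hgg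
  have hggm : Measurable gg := measurable_const.max (hwm.min measurable_const)
  have hggb : ∀ x, |gg x| ≤ Cb := fun x => by
    rw [abs_le]
    exact ⟨le_max_left _ _, max_le (by linarith) (min_le_right _ _)⟩
  have hggf : gg =ᵐ[μ] f := by
    filter_upwards [hfw, hCbw] with x h1 h2
    rw [abs_le] at h2
    rw [hgg]
    simp only [min_eq_left h2.2, max_eq_right h2.1]
    exact h1.symm
  have hgg2 : MemLp gg 2 μ := memℒp_two_of_bound hggm hggb
  have htog : toL2 μ gg = F := toL2_congr hgg2 hggf
  have hggD : sg.memD gg := by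
    have h1 : sg.memDom (toL2 μ f) := hfD
    rw [Semigroup2.memD, htog]
    exact h1
  have h0 : 0 ≤ hatS sg gg gg := hatS_nonneg_of_bounded sg q hM hker hdom' hggm hggb hggD
  -- formulas
  have hu_f : hatS sg u u = -⟪GU, U⟫ + (1/2) * ∫ x, (U x)^2 * a' x ∂μ := hatS_formula sg hu2
  have hg_f : hatS sg gg gg = -⟪GF, F⟫ + (1/2) * ∫ x, (F x)^2 * a' x ∂μ := by
    have := hatS_formula sg hgg2
    rw [htog] at this
    exact this
  -- inner product difference
  have hinner : ⟪GU, U⟫ - ⟪GF, F⟫ = ⟪GU - GF, U⟫ + ⟪GF, U - F⟫ := by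
    rw [inner_sub_left, inner_sub_right]; ring
  have ht1 : |⟪GU - GF, U⟫| ≤ δ * ‖U‖ := by
    refine (abs_real_inner_le_norm _ _).trans ?_
    exact mul_le_mul_of_nonneg_right hGUF (norm_nonneg _)
  have hGFn : ‖GF‖ ≤ ‖GU‖ + δ := by
    have h1 := norm_sub_norm_le GF GU
    rw [norm_sub_rev] at h1
    linarith
  have ht2 : |⟪GF, U - F⟫| ≤ (‖GU‖ + δ) * δ := by
    refine (abs_real_inner_le_norm _ _).trans ?_
    exact mul_le_mul hGFn hUF (norm_nonneg _) (by positivity)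
  -- integral difference
  have iU2a : Integrable (fun x => (U x)^2 * a' x) μ := by
    refine ((integrable_sq_of_L2 (Lp.memLp U)).bdd_mul (c := M') (Lp.aestronglyMeasurable _)
      (ha'bd.mono fun x hx => by simpa [Real.norm_eq_abs] using hx)).congr ?_
    exact Eventually.of_forall fun x => mul_comm _ _
  have iF2a : Integrable (fun x => (F x)^2 * a' x) μ := by
    refine ((integrable_sq_of_L2 (Lp.memLp F)).bdd_mul (c := M') (Lp.aestronglyMeasurable _)
      (ha'bd.mono fun x hx => by simpa [Real.norm_eq_abs] using hx)).congr ?_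
    exact Eventually.of_forall fun x => mul_comm _ _
  have hintdiff : (∫ x, (U x)^2 * a' x ∂μ) - ∫ x, (F x)^2 * a' x ∂μ
      = ∫ x, ((U x)^2 - (F x)^2) * a' x ∂μ := by
    rw [← integral_sub iU2a iF2a]
    refine integral_congr_ae (Eventually.of_forall fun x => ?_)
    ring
  -- Cauchy-Schwarz bound
  have hP2 : MemLp (fun x => |U x - F x|) 2 μ := by
    refine ((Lp.memLp U).sub (Lp.memLp F)).norm.ae_eq (Eventually.of_forall fun x => ?_)
    simp [Real.norm_eq_abs]
  have hQ2 : MemLp (fun x => |U x + F x|) 2 μ := by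
    refine ((Lp.memLp U).add (Lp.memLp F)).norm.ae_eq (Eventually.of_forall fun x => ?_)
    simp [Real.norm_eq_abs]
  have hPn : ‖toL2 μ (fun x => |U x - F x|)‖ = ‖U - F‖ := by
    rw [toL2, dif_pos hP2, Lp.norm_toLp, Lp.norm_def]
    congr 1
    calc eLpNorm (fun x => |U x - F x|) 2 μ
        = eLpNorm (fun x => U x - F x) 2 μ := by
          simp only [← Real.norm_eq_abs]
          exact eLpNorm_norm _
      _ = eLpNorm (⇑(U - F)) 2 μ := by
          refine eLpNorm_congr_ae ?_
          filter_upwards [Lp.coeFn_sub U F] with x hx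
          rw [hx]; rfl
  have hQn : ‖toL2 μ (fun x => |U x + F x|)‖ = ‖U + F‖ := by
    rw [toL2, dif_pos hQ2, Lp.norm_toLp, Lp.norm_def]
    congr 1
    calc eLpNorm (fun x => |U x + F x|) 2 μ
        = eLpNorm (fun x => U x + F x) 2 μ := by
          simp only [← Real.norm_eq_abs]
          exact eLpNorm_norm _
      _ = eLpNorm (⇑(U + F)) 2 μ := by
          refine eLpNorm_congr_ae ?_
          filter_upwards [Lp.coeFn_add U F] with x hx
          rw [hx]; rfl
  have hUFn : ‖U + F‖ ≤ 2*‖U‖ + δ := by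
    have h1 := norm_add_le U F
    have h2 := norm_sub_norm_le F U
    rw [norm_sub_rev] at h2
    linarith
  have hCS : ∫ x, |U x - F x| * |U x + F x| ∂μ ≤ ‖U - F‖ * ‖U + F‖ := by
    have h1 : ∫ x, |U x - F x| * |U x + F x| ∂μ
        = ⟪toL2 μ (fun x => |U x - F x|), toL2 μ (fun x => |U x + F x|)⟫ := by
      rw [inner_eq_integral]
      refine (integral_congr_ae ?_).symm
      filter_upwards [coeFn_toL2 hP2, coeFn_toL2 hQ2] with x h2 h3
      rw [h2, h3]
    rw [h1, ← hPn, ← hQn]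
    exact real_inner_le_norm _ _
  have ht3 : |∫ x, ((U x)^2 - (F x)^2) * a' x ∂μ| ≤ M' * (δ * (2*‖U‖+δ)) := by
    have hstep : |∫ x, ((U x)^2 - (F x)^2) * a' x ∂μ|
        ≤ ∫ x, M' * (|U x - F x| * |U x + F x|) ∂μ := by
      have hn := norm_integral_le_integral_norm (fun x => ((U x)^2 - (F x)^2) * a' x) (μ := μ)
      rw [Real.norm_eq_abs] at hn
      refine hn.trans ?_
      have iL : Integrable (fun x => ((U x)^2 - (F x)^2) * a' x) μ := by
        refine (iU2a.sub iF2a).congr (Eventually.of_forall fun x => ?_)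
        simp only [Pi.sub_apply]
        ring
      refine integral_mono_ae iL.norm
        ((integrable_mul_L2 hP2 hQ2).const_mul M') ?_
      filter_upwards [ha'bd] with x hx
      rw [Real.norm_eq_abs, abs_mul,
        show (U x)^2 - (F x)^2 = (U x - F x) * (U x + F x) by ring, abs_mul]
      rw [mul_comm M' _]
      exact mul_le_mul_of_nonneg_left hx (by positivity)
    refine hstep.trans ?_
    rw [integral_const_mul]
    refine mul_le_mul_of_nonneg_left ?_ hM'0
    refine hCS.trans ?_
    exact mul_le_mul hUF hUFn (norm_nonneg _) (by positivity)
  -- assemble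
  have hdiff : hatS sg u u
      = hatS sg gg gg - (⟪GU - GF, U⟫ + ⟪GF, U - F⟫)
        + (1/2) * ∫ x, ((U x)^2 - (F x)^2) * a' x ∂μ := by
    rw [hu_f, hg_f, ← hintdiff, ← hinner]; ring
  rw [hdiff]
  have hb1 := abs_le.1 ht1
  have hb2 := abs_le.1 ht2
  have hb3 := abs_le.1 ht3
  have hKdelta : δ * ‖U‖ + (‖GU‖ + δ) * δ + (1/2) * (M' * (δ * (2*‖U‖+δ))) ≤ ε := by
    have e1 : δ * ‖U‖ + (‖GU‖ + δ) * δ + (1/2) * (M' * (δ * (2*‖U‖+δ))) ≤ δ * K := by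
      rw [hK]
      have hnU := norm_nonneg U
      have hnGU := norm_nonneg GU
      nlinarith [hδ0.le, hδ1, hM'0]
    refine e1.trans ?_
    nlinarith [hδ0.le, hK0]
  linarith

end Aux


/-- Lemma 2.11: let the (not necessarily contractive) strongly continuous semigroups
`T_{n,t}` and `T_t` be given by transition probability kernels, and assume conditions
(c6)(i), (c6)(ii) and (c6)(iv).  Then the perturbed forms are nonnegative:
`Ŝₙ(uₙ, uₙ) ≥ 0` for every `n ≥ 1` and `uₙ ∈ D(Sₙ)`, and `Ŝ(u, u) ≥ 0` for every
`u ∈ D(S)`. -/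
theorem hatS_nonneg (fr : Frame0 E) (sg : ∀ n, Semigroup2 (fr.ν n))
    (p : ℕ → ℝ → ProbabilityTheory.Kernel E E)
    (hMarkov : ∀ n t, ProbabilityTheory.IsMarkovKernel (p n t))
    (hkernel : ∀ n, ∀ t : ℝ, 0 ≤ t → ∀ f : E → ℝ, Measurable f →
      (∃ C : ℝ, ∀ x, |f x| ≤ C) →
      (sg n).Tf t f =ᵐ[fr.ν n] fun x => ∫ y, f y ∂((p n t) x))
    -- condition (c6)(i)
    (h_one_dom : ∀ n, (sg n).memD' (one E))
    (h_one_bdd : ∃ M : ℝ, ∀ n, 1 ≤ n →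
      eLpNorm ((sg n).Af' (one E)) ⊤ (fr.ν n) ≤ ENNReal.ofReal M)
    -- condition (c6)(ii)
    (hT'1_bdd : ∀ t : ℝ, 0 ≤ t → MemLp ((sg 0).Tf' t (one E)) ⊤ (fr.ν 0))
    (hT'1_lim : Tendsto (fun t : ℝ =>
        eLpNorm (fun x => t⁻¹ * ((sg 0).Tf' t (one E) x - 1) - (sg 0).Af' (one E) x)
          ⊤ (fr.ν 0))
      (𝓝[>] (0:ℝ)) (𝓝 0))
    -- condition (c6)(iv)
    (hdense : ∀ n, 1 ≤ n → ∃ Dn : Set (E → ℝ),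
      (∀ f ∈ Dn, MemLp f 2 (fr.ν n) ∧ MemLp f ⊤ (fr.ν n) ∧ (sg n).memD f) ∧
      (∀ u : E → ℝ, MemLp u 2 (fr.ν n) → (sg n).memD u → ∀ ε : ℝ, 0 < ε →
        ∃ f ∈ Dn,
          ip (fr.ν n) (fun x => u x - f x) (fun x => u x - f x)
            + ip (fr.ν n) (fun x => (sg n).Af u x - (sg n).Af f x)
                (fun x => (sg n).Af u x - (sg n).Af f x) < ε)) :
    (∀ n, 1 ≤ n → ∀ u : E → ℝ, MemLp u 2 (fr.ν n) → (sg n).memD u →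
      0 ≤ hatS (sg n) u u) ∧
    (∀ u : E → ℝ, MemLp u 2 (fr.ν 0) → (sg 0).memD u → 0 ≤ hatS (sg 0) u u) := by
  constructor
  · intro n hn u hu2 hD
    haveI := fr.prob n
    obtain ⟨M, hMall⟩ := h_one_bdd
    obtain ⟨Dn, hDn, happrox⟩ := hdense n hn
    refine hatS_nonneg_dense (sg n) (p n) (hMarkov n)
      (fun t ht f hf hbf => hkernel n t ht f hf hbf)
      (h_one_dom n) (M := M) ?_ Dn hDn happrox hu2 hD
    have := hMall n hn
    simpa only [Semigroup2.Af'] using this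
  · intro u hu2 hD
    haveI := fr.prob 0
    refine hatS_nonneg_zero (sg 0) (p 0) (hMarkov 0)
      (fun t ht f hf hbf => hkernel 0 t ht f hf hbf)
      (fun t ht => by simpa only [Semigroup2.Tf'] using hT'1_bdd t ht) ?_ hu2 hD
    simpa only [Semigroup2.Tf', Semigroup2.Af'] using hT'1_lim

end Mosco
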